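/- Let A and B be N×N real symmetric matrices that are both negative definite and satisfy 1/2 ≤ (x^T A x)/(x^T B x) ≤ 3/2 for every nonzero x ∈ ℝ^N. Let D be an N×N diagonal matrix with nonnegative diagonal entries, and set M = I_N - A + D and P = I_N - B + D. Then P is symmetric positive definite, and every eigenvalue λ of P^{-1} M is real and satisfies 1/2 < λ < 3/2. -/

import Mathlib

open Matrix

private lemma dotSelf_pos {N : ℕ} {v : Fin N → ℝ} (hv : v ≠ 0) : 0 < v ⬝ᵥ v := by
  have h1 : 0 ≤ v ⬝ᵥ v := Finset.sum_nonneg fun i _ => mul_self_nonneg (v i)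
  rcases h1.lt_or_eq with h | h
  · exact h
  · exact absurd (dotProduct_self_eq_zero.mp h.symm) hv

private lemma diag_nonneg {N : ℕ} {d : Fin N → ℝ} (hd : ∀ i, 0 ≤ d i) (v : Fin N → ℝ) :
    0 ≤ v ⬝ᵥ (Matrix.diagonal d *ᵥ v) := by
  apply Finset.sum_nonneg
  intro i _
  simp only [Matrix.mulVec_diagonal]
  nlinarith [hd i, sq_nonneg (v i)]

/-- Hermitian form of a complexified real symmetric matrix splits into real parts. -/
private lemma herm_split {N : ℕ} (C : Matrix (Fin N) (Fin N) ℝ) (hC : C.IsSymm)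
    (z : Fin N → ℂ) :
    star z ⬝ᵥ ((C.map (fun a : ℝ => (a : ℂ))) *ᵥ z)
      = (((fun i => (z i).re) ⬝ᵥ (C *ᵥ fun i => (z i).re)
          + (fun i => (z i).im) ⬝ᵥ (C *ᵥ fun i => (z i).im) : ℝ) : ℂ) := by
  set x : Fin N → ℝ := fun i => (z i).re
  set y : Fin N → ℝ := fun i => (z i).im
  set u : Fin N → ℂ := fun i => ((x i : ℂ))
  set v : Fin N → ℂ := fun i => ((y i : ℂ))
  have hz : z = u + Complex.I • v := by
    funext i
    simp [u, v, x, y, Complex.ext_iff]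
  have hstar : star z = u - Complex.I • v := by
    funext i
    simp [hz, u, v, Complex.ext_iff, Complex.add_im, Complex.add_re]
  set Cc := C.map (fun a : ℝ => (a : ℂ)) with hCc
  have hCcsymm : Cc.IsSymm := hC.map _
  have key : ∀ w₁ w₂ : Fin N → ℂ, w₂ ⬝ᵥ (Cc *ᵥ w₁) = w₁ ⬝ᵥ (Cc *ᵥ w₂) := by
    intro w₁ w₂
    rw [Matrix.dotProduct_mulVec, ← Matrix.mulVec_transpose, hCcsymm.eq,
      dotProduct_comm]
  have hform : ∀ w : Fin N → ℝ,
      (fun i => ((w i : ℂ))) ⬝ᵥ (Cc *ᵥ fun i => ((w i : ℂ))) = ((w ⬝ᵥ (C *ᵥ w) : ℝ) : ℂ) := by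
    intro w
    simp [dotProduct, Matrix.mulVec, hCc, Matrix.map_apply, Finset.mul_sum]
  rw [hstar, hz]
  rw [Matrix.mulVec_add, sub_dotProduct, dotProduct_add, dotProduct_add]
  rw [Matrix.mulVec_smul, smul_dotProduct, smul_dotProduct,
    dotProduct_smul, dotProduct_smul]
  have hcross : u ⬝ᵥ (Cc *ᵥ v) = v ⬝ᵥ (Cc *ᵥ u) := key v u
  have hu := hform x
  have hv := hform y
  simp only [u, v] at hcross hu hv ⊢
  rw [hu, hv, hcross]
  simp only [smul_eq_mul, ← mul_assoc, Complex.I_mul_I]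
  push_cast
  ring

open Matrix in
theorem stmt16 (N : ℕ) (A B : Matrix (Fin N) (Fin N) ℝ)
    (hAsymm : A.IsSymm) (hBsymm : B.IsSymm)
    (hAneg : ∀ x : Fin N → ℝ, x ≠ 0 → x ⬝ᵥ (A *ᵥ x) < 0)
    (hBneg : ∀ x : Fin N → ℝ, x ≠ 0 → x ⬝ᵥ (B *ᵥ x) < 0)
    (hAB : ∀ x : Fin N → ℝ, x ≠ 0 →
      1 / 2 ≤ (x ⬝ᵥ (A *ᵥ x)) / (x ⬝ᵥ (B *ᵥ x)) ∧
        (x ⬝ᵥ (A *ᵥ x)) / (x ⬝ᵥ (B *ᵥ x)) ≤ 3 / 2)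
    (d : Fin N → ℝ) (hd : ∀ i, 0 ≤ d i)
    (M P : Matrix (Fin N) (Fin N) ℝ)
    (hM : M = 1 - A + Matrix.diagonal d) (hP : P = 1 - B + Matrix.diagonal d) :
    P.PosDef ∧
      ∀ (μ : ℂ) (z : Fin N → ℂ), z ≠ 0 →
        ((P⁻¹ * M).map (fun a : ℝ => (a : ℂ))) *ᵥ z = μ • z →
        μ.im = 0 ∧ 1 / 2 < μ.re ∧ μ.re < 3 / 2 := by
  -- expansion of quadratic forms
  have hMq : ∀ x : Fin N → ℝ, x ⬝ᵥ (M *ᵥ x)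
      = x ⬝ᵥ x - x ⬝ᵥ (A *ᵥ x) + x ⬝ᵥ (Matrix.diagonal d *ᵥ x) := by
    intro x
    rw [hM, Matrix.add_mulVec, Matrix.sub_mulVec, Matrix.one_mulVec,
      dotProduct_add, dotProduct_sub]
  have hPq : ∀ x : Fin N → ℝ, x ⬝ᵥ (P *ᵥ x)
      = x ⬝ᵥ x - x ⬝ᵥ (B *ᵥ x) + x ⬝ᵥ (Matrix.diagonal d *ᵥ x) := by
    intro x
    rw [hP, Matrix.add_mulVec, Matrix.sub_mulVec, Matrix.one_mulVec,
      dotProduct_add, dotProduct_sub]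
  -- P posdef (real)
  have hPsymm : P.IsSymm := by
    rw [hP]
    exact ((Matrix.isSymm_one.sub hBsymm).add (Matrix.isSymm_diagonal d))
  have hMsymm : M.IsSymm := by
    rw [hM]
    exact ((Matrix.isSymm_one.sub hAsymm).add (Matrix.isSymm_diagonal d))
  have hPpos0 : ∀ x : Fin N → ℝ, x ≠ 0 → 0 < x ⬝ᵥ (P *ᵥ x) := by
    intro x hx
    rw [hPq]
    have := hBneg x hx
    have := dotSelf_pos hx
    have := diag_nonneg hd x
    linarith
  have hPposDef : P.PosDef := by
    refine Matrix.posDef_iff_dotProduct_mulVec.mpr ⟨?_, fun x hx => ?_⟩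
    · rw [Matrix.IsHermitian]
      simpa using hPsymm.eq
    · simpa using hPpos0 x hx
  refine ⟨hPposDef, ?_⟩
  -- bounds for real quadratic forms (nonstrict, valid for all x)
  have hbound : ∀ x : Fin N → ℝ,
      (1/2) * (x ⬝ᵥ (P *ᵥ x)) ≤ x ⬝ᵥ (M *ᵥ x)
        ∧ x ⬝ᵥ (M *ᵥ x) ≤ (3/2) * (x ⬝ᵥ (P *ᵥ x)) := by
    intro x
    by_cases hx : x = 0
    · subst hx; simp
    · have hb := hBneg x hx
      obtain ⟨h1, h2⟩ := hAB x hx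
      have ha1 : x ⬝ᵥ (A *ᵥ x) ≤ (1/2) * (x ⬝ᵥ (B *ᵥ x)) := by
        rw [le_div_iff_of_neg hb] at h1; linarith
      have ha2 : (3/2) * (x ⬝ᵥ (B *ᵥ x)) ≤ x ⬝ᵥ (A *ᵥ x) := by
        rw [div_le_iff_of_neg hb] at h2; linarith
      have hs := dotSelf_pos hx
      have hdd := diag_nonneg hd x
      rw [hMq, hPq]
      constructor <;> linarith
  -- matrix identity: M = P * (P⁻¹ * M)
  have hdet : IsUnit P.det := (hPposDef.det_pos).ne'.isUnit
  have hPPinv : P * (P⁻¹ * M) = M := by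
    rw [← mul_assoc, Matrix.mul_nonsing_inv P hdet, one_mul]
  intro μ z hz heig
  set f : ℝ →+* ℂ := Complex.ofRealHom
  have hmapeq : ∀ C : Matrix (Fin N) (Fin N) ℝ,
      C.map (fun a : ℝ => (a : ℂ)) = C.map f := fun C => rfl
  have hMc : M.map (fun a : ℝ => (a : ℂ))
      = P.map (fun a : ℝ => (a : ℂ)) * (P⁻¹ * M).map (fun a : ℝ => (a : ℂ)) := by
    rw [hmapeq, hmapeq, hmapeq, ← Matrix.map_mul, hPPinv]
  have heq : (M.map (fun a : ℝ => (a : ℂ))) *ᵥ z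
      = μ • ((P.map (fun a : ℝ => (a : ℂ))) *ᵥ z) := by
    rw [hMc, ← Matrix.mulVec_mulVec, heig, Matrix.mulVec_smul]
  -- Hermitian forms
  set x : Fin N → ℝ := fun i => (z i).re
  set y : Fin N → ℝ := fun i => (z i).im
  set m : ℝ := x ⬝ᵥ (M *ᵥ x) + y ⬝ᵥ (M *ᵥ y) with hm
  set p : ℝ := x ⬝ᵥ (P *ᵥ x) + y ⬝ᵥ (P *ᵥ y) with hp
  have hMform := herm_split M hMsymm z
  have hPform := herm_split P hPsymm z
  have hmain : (m : ℂ) = μ * (p : ℂ) := by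
    rw [hm, hp]
    rw [← hMform, ← hPform, heq, dotProduct_smul, smul_eq_mul]
  -- real bounds on m, p
  have hxy : x ≠ 0 ∨ y ≠ 0 := by
    by_contra h
    push_neg at h
    apply hz
    funext i
    have hx := congr_fun h.1 i
    have hy := congr_fun h.2 i
    simp only [x, y, Pi.zero_apply] at hx hy
    exact Complex.ext hx hy
  have hppos : 0 < p := by
    have h1 : ∀ w : Fin N → ℝ, 0 ≤ w ⬝ᵥ (P *ᵥ w) := by
      intro w
      by_cases hw : w = 0
      · subst hw; simp
      · exact (hPpos0 w hw).le
    rcases hxy with hx | hy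
    · have := hPpos0 x hx; have := h1 y; rw [hp]; linarith
    · have := hPpos0 y hy; have := h1 x; rw [hp]; linarith
  have hmb1 : (1/2) * p < m := by
    have hgap : ∀ w : Fin N → ℝ,
        (1/2) * (w ⬝ᵥ (P *ᵥ w)) ≤ w ⬝ᵥ (M *ᵥ w) := fun w => (hbound w).1
    have hstrict : ∀ w : Fin N → ℝ, w ≠ 0 →
        (1/2) * (w ⬝ᵥ (P *ᵥ w)) < w ⬝ᵥ (M *ᵥ w) := by
      intro w hw
      have hb := hBneg w hw
      obtain ⟨h1, _⟩ := hAB w hw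
      have ha1 : w ⬝ᵥ (A *ᵥ w) ≤ (1/2) * (w ⬝ᵥ (B *ᵥ w)) := by
        rw [le_div_iff_of_neg hb] at h1; linarith
      have hs := dotSelf_pos hw
      have hdd := diag_nonneg hd w
      rw [hMq, hPq]; linarith
    rcases hxy with hx | hy
    · have := hstrict x hx; have := hgap y; rw [hm, hp]; linarith
    · have := hstrict y hy; have := hgap x; rw [hm, hp]; linarith
  have hmb2 : m < (3/2) * p := by
    have hgap : ∀ w : Fin N → ℝ,
        w ⬝ᵥ (M *ᵥ w) ≤ (3/2) * (w ⬝ᵥ (P *ᵥ w)) := fun w => (hbound w).2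
    have hstrict : ∀ w : Fin N → ℝ, w ≠ 0 →
        w ⬝ᵥ (M *ᵥ w) < (3/2) * (w ⬝ᵥ (P *ᵥ w)) := by
      intro w hw
      have hb := hBneg w hw
      obtain ⟨_, h2⟩ := hAB w hw
      have ha2 : (3/2) * (w ⬝ᵥ (B *ᵥ w)) ≤ w ⬝ᵥ (A *ᵥ w) := by
        rw [div_le_iff_of_neg hb] at h2; linarith
      have hs := dotSelf_pos hw
      have hdd := diag_nonneg hd w
      rw [hMq, hPq]; linarith
    rcases hxy with hx | hy
    · have := hstrict x hx; have := hgap y; rw [hm, hp]; linarith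
    · have := hstrict y hy; have := hgap x; rw [hm, hp]; linarith
  -- extract real/imag parts of hmain
  have hre : m = μ.re * p := by
    have := congrArg Complex.re hmain
    simpa [Complex.mul_re] using this
  have him : 0 = μ.im * p := by
    have := congrArg Complex.im hmain
    simpa [Complex.mul_im] using this
  refine ⟨?_, ?_, ?_⟩
  · have := him
    rcases mul_eq_zero.mp this.symm with h | h
    · exact h
    · exact absurd h hppos.ne'
  · have : (1/2) * p < μ.re * p := by rw [← hre]; exact hmb1
    exact lt_of_mul_lt_mul_right (by linarith) hppos.le |>.trans_le le_rfl
  · have : μ.re * p < (3/2) * p := by rw [← hre]; exact hmb2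
    exact lt_of_mul_lt_mul_right (by linarith) hppos.le
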